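/- arXiv:1308.4499 — 4 statements merged into one kernel-verified Lean document; each statement's English description precedes it below -/
import Mathlib

section
/- Let C be a linear code of length n over F_q whose dual distance d⊥ satisfies d⊥ ≥ 5, with generator matrix whose rows (as codeword-coordinate functionals) are h_1, ..., h_n ∈ F_q^k. Then for every nonzero vector v ∈ F_q^k, the number of ordered pairs (t_1, t_2) with 1 ≤ t_1, t_2 ≤ n and h_{t_1} + h_{t_2} = v is at most 3. -/
private lemma card4_le {α : Type*} [DecidableEq α] (a b c d : α) :
    ({a, b, c, d} : Finset α).card ≤ 4 := by
  have h1 := Finset.card_insert_le a ({b, c, d} : Finset α)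
  have h2 := Finset.card_insert_le b ({c, d} : Finset α)
  have h3 := Finset.card_insert_le c ({d} : Finset α)
  simp [Finset.card_singleton] at *
  omega

private lemma indep_combo {n k : ℕ} {F : Type*} [Field F] [DecidableEq F]
    (h : Fin n → (Fin k → F))
    (hdual : ∀ s : Finset (Fin n), s.card ≤ 4 →
      LinearIndependent F (fun i : {x // x ∈ s} => h i))
    (s : Finset (Fin n)) (hs : s.card ≤ 4) (e : Fin n → F)
    (hsum : ∑ i ∈ s, e i • h i = 0) : ∀ i ∈ s, e i = 0 := by
  have hli := hdual s hs
  rw [Fintype.linearIndependent_iff] at hli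
  intro i hi
  have := hli (fun j => e j) ?_ ⟨i, hi⟩
  · exact this
  · rw [Finset.sum_coe_sort s (fun j => e j • h j)]
    exact hsum

private lemma h_inj {n k : ℕ} {F : Type*} [Field F] [DecidableEq F]
    (h : Fin n → (Fin k → F))
    (hdual : ∀ s : Finset (Fin n), s.card ≤ 4 →
      LinearIndependent F (fun i : {x // x ∈ s} => h i))
    {a b : Fin n} (hab : h a = h b) : a = b := by
  by_contra hne
  have hcard : ({a, b} : Finset (Fin n)).card ≤ 4 := by
    have := Finset.card_insert_le a ({b} : Finset (Fin n))
    simp at this ⊢; omega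
  have := indep_combo h hdual {a, b} hcard (fun i => if i = a then 1 else -1) ?_ a (by simp)
  · simp at this
  · rw [Finset.sum_pair hne]
    simp [hne, hab, Ne.symm hne]

private lemma key_lemma {n k : ℕ} {F : Type*} [Field F] [DecidableEq F]
    (h : Fin n → (Fin k → F))
    (hdual : ∀ s : Finset (Fin n), s.card ≤ 4 →
      LinearIndependent F (fun i : {x // x ∈ s} => h i))
    (a b c d : Fin n) (hne0 : h a + h b ≠ 0)
    (heq : h a + h b = h c + h d) : (a = c ∧ b = d) ∨ (a = d ∧ b = c) := by
  by_cases hac : a = c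
  · subst hac
    left
    exact ⟨rfl, h_inj h hdual (add_left_cancel heq)⟩
  by_cases had : a = d
  · subst had
    right
    refine ⟨rfl, h_inj h hdual ?_⟩
    have : h a + h b = h a + h c := by rw [heq]; ring
    exact add_left_cancel this
  by_cases hbc : b = c
  · subst hbc
    exfalso
    apply had
    apply h_inj h hdual
    have : h b + h a = h b + h d := by rw [← heq]; ring
    exact add_left_cancel this
  by_cases hbd : b = d
  · subst hbd
    exfalso
    apply hac
    apply h_inj h hdual
    have : h a + h b = h c + h b := heq
    exact add_right_cancel this
  -- now a,b disjoint from c,d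
  exfalso
  by_cases hab : a = b
  · subst hab
    by_cases hcd : c = d
    · subst hcd
      -- 2 h a = 2 h c, a ≠ c
      by_cases h2 : (2 : F) = 0
      · apply hne0
        have : h a + h a = (2 : F) • h a := by rw [two_smul]
        rw [this, h2, zero_smul]
      · apply hac
        apply h_inj h hdual
        have h2' : (2 : F) • h a = (2 : F) • h c := by
          rw [two_smul, two_smul]; exact heq
        exact smul_right_injective _ h2 h2'
    · -- 2 h a = h c + h d, a, c, d distinct
      have hcard : ({a, c, d} : Finset (Fin n)).card ≤ 4 := by
        have h1 := Finset.card_insert_le a ({c, d} : Finset (Fin n))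
        have h2 := Finset.card_insert_le c ({d} : Finset (Fin n))
        simp at *; omega
      have := indep_combo h hdual {a, c, d} hcard
        (fun i => if i = a then 2 else -1) ?_ c (by simp)
      · simp [Ne.symm hac] at this
      · rw [Finset.sum_insert (by simp [hac, had]), Finset.sum_pair hcd]
        simp only [if_pos rfl, if_neg (Ne.symm hac), if_neg (Ne.symm had), ite_true,
          neg_smul, one_smul, two_smul]
        linear_combination heq
  · by_cases hcd : c = d
    · subst hcd
      -- h a + h b = 2 h c, a, b, c distinct
      have hcard : ({a, b, c} : Finset (Fin n)).card ≤ 4 := by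
        have h1 := Finset.card_insert_le a ({b, c} : Finset (Fin n))
        have h2 := Finset.card_insert_le b ({c} : Finset (Fin n))
        simp at *; omega
      have := indep_combo h hdual {a, b, c} hcard
        (fun i => if i = c then -2 else 1) ?_ a (by simp)
      · simp [hac] at this
      · rw [Finset.sum_insert (by simp [hab, hac]), Finset.sum_pair hbc]
        simp only [if_neg hac, if_neg hbc, if_pos rfl, ite_true, neg_smul, one_smul, two_smul]
        linear_combination heq
    · -- all four distinct
      have := indep_combo h hdual {a, b, c, d} (card4_le a b c d)
        (fun i => if i = c ∨ i = d then -1 else 1) ?_ a (by simp)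
      · simp [hac, had] at this
      · rw [Finset.sum_insert (by simp [hab, hac, had]),
          Finset.sum_insert (by simp [hbc, hbd]), Finset.sum_pair hcd]
        simp only [if_neg (by simp [hac, had] : ¬(a = c ∨ a = d)),
          if_neg (by simp [hbc, hbd] : ¬(b = c ∨ b = d)),
          if_pos (Or.inl rfl : c = c ∨ c = d), if_pos (Or.inr rfl : d = c ∨ d = d)]
        simp only [true_or, or_true, ite_true, one_smul, neg_smul]
        linear_combination heq

theorem pair_sum_count_le_three (n k : ℕ) (F : Type*) [Field F] [Fintype F] [DecidableEq F]
    (h : Fin n → (Fin k → F))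
    (hdual : ∀ s : Finset (Fin n), s.card ≤ 4 →
      LinearIndependent F (fun i : {x // x ∈ s} => h i))
    (v : Fin k → F) (hv : v ≠ 0) :
    (Finset.univ.filter (fun t : Fin n × Fin n => h t.1 + h t.2 = v)).card ≤ 3 := by
  set S := Finset.univ.filter (fun t : Fin n × Fin n => h t.1 + h t.2 = v) with hS
  rcases S.eq_empty_or_nonempty with he | ⟨p, hp⟩
  · simp [he]
  · have hpv : h p.1 + h p.2 = v := by
      rw [hS, Finset.mem_filter] at hp; exact hp.2
    have hsub : S ⊆ {p, (p.2, p.1)} := by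
      intro q hq
      have hqv : h q.1 + h q.2 = v := by
        rw [hS, Finset.mem_filter] at hq; exact hq.2
      have hne0 : h q.1 + h q.2 ≠ 0 := by rw [hqv]; exact hv
      have := key_lemma h hdual q.1 q.2 p.1 p.2 hne0 (by rw [hqv, hpv])
      rcases this with ⟨h1, h2⟩ | ⟨h1, h2⟩
      · simp only [Finset.mem_insert]
        left
        exact Prod.ext h1 h2
      · simp only [Finset.mem_insert, Finset.mem_singleton]
        right
        exact Prod.ext h1 h2
    calc S.card ≤ ({p, (p.2, p.1)} : Finset (Fin n × Fin n)).card :=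
          Finset.card_le_card hsub
      _ ≤ 2 := by
          have := Finset.card_insert_le p ({(p.2, p.1)} : Finset (Fin n × Fin n))
          simp at this ⊢; omega
      _ ≤ 3 := by omega
end

section
/- Let l ≥ 1, let {I_λ}_{λ=1}^{v_a} be a partition of [1,l] into nonempty sets with shifted sets Ĩ_λ = I_λ - 1 (mod l), and let {J_μ}_{μ=1}^{v_b} be another partition of [1,l] into nonempty sets. Consider the system of linear equations over ℝ in variables X_1,...,X_l, Y_1,...,Y_l: Σ_{u∈I_λ} X_u = Σ_{u∈Ĩ_λ} Y_u for all λ, and Σ_{u∈J_μ} X_u = Σ_{u∈J_μ} Y_u for all μ. Then the solution space W ⊆ ℝ^{2l} has dimension exactly 2l - v_a - v_b + 1. -/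
open Finset
open Fin.NatCast

private def Pk (l : ℕ) [NeZero l] (k : ℕ) : Fin l → ℝ :=
  fun u => if u.val < k then 1 else 0

private lemma tele {l va : ℕ} [NeZero l] (γa : Fin l → Fin va) :
    ∀ k : ℕ, k ≤ l → ∀ lam : Fin va,
      (∑ u ∈ univ.filter (fun u => γa u = lam), Pk l k u)
        - (∑ u ∈ univ.filter (fun u => γa (u + 1) = lam), Pk l k u)
      = (if γa 0 = lam then (1:ℝ) else 0)
        - (if γa ((k : ℕ) : Fin l) = lam then 1 else 0) := by
  intro k
  induction k with
  | zero =>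
    intro _ lam
    simp [Pk]
  | succ k ih =>
    intro hk lam
    have hkl : k < l := hk
    have hval : ((k : Fin l) : ℕ) = k := by
      simp [Fin.val_natCast, Nat.mod_eq_of_lt hkl]
    have hsplit : ∀ u : Fin l,
        Pk l (k+1) u = Pk l k u + (if u = (k : Fin l) then 1 else 0) := by
      intro u
      rcases lt_trichotomy u.val k with h | h | h
      · have h1 : u.val < k + 1 := Nat.lt_succ_of_lt h
        have h2 : u ≠ (k : Fin l) := by
          intro hu
          rw [hu, hval] at h
          exact lt_irrefl _ h
        simp [Pk, h1, h, h2]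
      · have h1 : u.val < k + 1 := by omega
        have h2 : u = (k : Fin l) := by
          apply Fin.ext
          rw [hval]; exact h
        subst h2
        simp [Pk, hval, Nat.lt_succ_self, lt_self_iff_false]
      · have h1 : ¬ u.val < k + 1 := by omega
        have h3 : ¬ u.val < k := by omega
        have h2 : u ≠ (k : Fin l) := by
          intro hu
          rw [hu, hval] at h
          exact lt_irrefl _ h
        simp [Pk, h1, h3, h2]
    have hsum : ∀ s : Finset (Fin l),
        ∑ u ∈ s, Pk l (k+1) u
          = (∑ u ∈ s, Pk l k u) + (if (k : Fin l) ∈ s then (1:ℝ) else 0) := by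
      intro s
      simp_rw [hsplit]
      rw [Finset.sum_add_distrib, Finset.sum_ite_eq' s]
    have hcast : ((k+1 : ℕ) : Fin l) = (k : Fin l) + 1 := by
      push_cast
      ring
    rw [hsum, hsum, hcast]
    have hih := ih (by omega) lam
    simp only [Finset.mem_filter, Finset.mem_univ, true_and]
    split_ifs at hih ⊢ <;> linarith

private lemma key {l va : ℕ} [NeZero l] (γa : Fin l → Fin va)
    (ha : Function.Surjective γa) (r : Fin va → ℝ) (hr : ∑ lam, r lam = 0) :
    ∃ X : Fin l → ℝ, ∀ lam : Fin va,
      (∑ u ∈ univ.filter (fun u => γa u = lam), X u)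
        - (∑ u ∈ univ.filter (fun u => γa (u + 1) = lam), X u) = r lam := by
  choose s hs using ha
  refine ⟨fun u => ∑ lam', (-(r lam')) * Pk l ((s lam').val) u, ?_⟩
  intro lam
  have h1 : ∀ lam' : Fin va,
      (∑ u ∈ univ.filter (fun u => γa u = lam), Pk l ((s lam').val) u)
        - (∑ u ∈ univ.filter (fun u => γa (u + 1) = lam), Pk l ((s lam').val) u)
      = (if γa 0 = lam then (1:ℝ) else 0) - (if lam' = lam then 1 else 0) := by
    intro lam'
    rw [tele γa ((s lam').val) (le_of_lt (s lam').isLt) lam, Fin.cast_val_eq_self, hs]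
  have hA : (∑ u ∈ univ.filter (fun u => γa u = lam),
        ∑ lam', (-(r lam')) * Pk l ((s lam').val) u)
      = ∑ lam', (-(r lam')) *
          ∑ u ∈ univ.filter (fun u => γa u = lam), Pk l ((s lam').val) u := by
    rw [Finset.sum_comm]
    simp_rw [Finset.mul_sum]
  have hB : (∑ u ∈ univ.filter (fun u => γa (u + 1) = lam),
        ∑ lam', (-(r lam')) * Pk l ((s lam').val) u)
      = ∑ lam', (-(r lam')) *
          ∑ u ∈ univ.filter (fun u => γa (u + 1) = lam), Pk l ((s lam').val) u := by
    rw [Finset.sum_comm]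
    simp_rw [Finset.mul_sum]
  rw [hA, hB, ← Finset.sum_sub_distrib]
  simp_rw [← mul_sub, h1, mul_sub]
  rw [Finset.sum_sub_distrib, ← Finset.sum_mul]
  have h2 : (∑ lam', -(r lam')) = 0 := by
    rw [Finset.sum_neg_distrib, hr, neg_zero]
  rw [h2, zero_mul]
  simp [Finset.sum_ite_eq' univ lam (fun lam' => -(r lam'))]

theorem solution_space_dim (l va vb : ℕ) [NeZero l] (hl : 1 ≤ l)
    (γa : Fin l → Fin va) (γb : Fin l → Fin vb)
    (ha : Function.Surjective γa) (hb : Function.Surjective γb)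
    (W : Submodule ℝ ((Fin l → ℝ) × (Fin l → ℝ)))
    (hW : ∀ w : (Fin l → ℝ) × (Fin l → ℝ), w ∈ W ↔
      ((∀ lam : Fin va,
          ∑ u ∈ Finset.univ.filter (fun u => γa u = lam), w.1 u
            = ∑ u ∈ Finset.univ.filter (fun u => γa (u + 1) = lam), w.2 u) ∧
       (∀ mu : Fin vb,
          ∑ u ∈ Finset.univ.filter (fun u => γb u = mu), w.1 u
            = ∑ u ∈ Finset.univ.filter (fun u => γb u = mu), w.2 u))) :
    Module.finrank ℝ W = 2 * l - va - vb + 1 := by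
  classical
  -- the linear map whose kernel is W
  set T : ((Fin l → ℝ) × (Fin l → ℝ)) →ₗ[ℝ] ((Fin va → ℝ) × (Fin vb → ℝ)) :=
  { toFun := fun w =>
      (fun lam => (∑ u ∈ univ.filter (fun u => γa u = lam), w.1 u)
          - ∑ u ∈ univ.filter (fun u => γa (u + 1) = lam), w.2 u,
       fun mu => (∑ u ∈ univ.filter (fun u => γb u = mu), w.1 u)
          - ∑ u ∈ univ.filter (fun u => γb u = mu), w.2 u)
    map_add' := by
      intro w1 w2
      refine Prod.ext ?_ ?_ <;> funext x <;>
        simp [Finset.sum_add_distrib, Prod.fst_add, Prod.snd_add] <;> ring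
    map_smul' := by
      intro c w
      refine Prod.ext ?_ ?_ <;> funext x <;>
        simp [Finset.mul_sum, mul_sub] } with hT
  set φ : ((Fin va → ℝ) × (Fin vb → ℝ)) →ₗ[ℝ] ℝ :=
  { toFun := fun pq => (∑ lam, pq.1 lam) - ∑ mu, pq.2 mu
    map_add' := by
      intro p1 p2
      simp [Finset.sum_add_distrib]
      ring
    map_smul' := by
      intro c p
      simp [Finset.mul_sum, mul_sub] } with hφ
  have hker : LinearMap.ker T = W := by
    ext w
    rw [LinearMap.mem_ker, hW w]
    simp only [hT, LinearMap.coe_mk, AddHom.coe_mk, Prod.ext_iff, Prod.fst_zero,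
      Prod.snd_zero, funext_iff, Pi.zero_apply, sub_eq_zero]
  have hrange : LinearMap.range T = LinearMap.ker φ := by
    apply le_antisymm
    · rintro _ ⟨w, rfl⟩
      simp only [LinearMap.mem_ker, hφ, hT, LinearMap.coe_mk, AddHom.coe_mk]
      rw [Finset.sum_sub_distrib, Finset.sum_sub_distrib,
        Finset.sum_fiberwise univ γa w.1,
        Finset.sum_fiberwise univ (fun u => γa (u + 1)) w.2,
        Finset.sum_fiberwise univ γb w.1,
        Finset.sum_fiberwise univ γb w.2]
      ring
    · rintro ⟨p, q⟩ hpq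
      simp only [LinearMap.mem_ker, hφ, LinearMap.coe_mk, AddHom.coe_mk, sub_eq_zero] at hpq
      -- z has the prescribed sums over the fibers of γb
      set z : Fin l → ℝ :=
        fun u => q (γb u) / ((univ.filter (fun x => γb x = γb u)).card : ℝ) with hzdef
      have hz : ∀ mu : Fin vb, ∑ u ∈ univ.filter (fun u => γb u = mu), z u = q mu := by
        intro mu
        obtain ⟨u0, hu0⟩ := hb mu
        have hpos : 0 < (univ.filter (fun x => γb x = mu)).card :=
          Finset.card_pos.mpr ⟨u0, by simp [hu0]⟩
        have hconst : ∀ u ∈ univ.filter (fun u => γb u = mu),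
            z u = q mu / ((univ.filter (fun x => γb x = mu)).card : ℝ) := by
          intro u hu
          rw [Finset.mem_filter] at hu
          simp [hzdef, hu.2]
        rw [Finset.sum_congr rfl hconst, Finset.sum_const, nsmul_eq_mul]
        field_simp
      have hzsum : ∑ u, z u = ∑ mu, q mu := by
        rw [← Finset.sum_fiberwise univ γb z]
        exact Finset.sum_congr rfl fun mu _ => hz mu
      set r : Fin va → ℝ :=
        fun lam => p lam - ∑ u ∈ univ.filter (fun u => γa (u + 1) = lam), z u with hrdef
      have hr : ∑ lam, r lam = 0 := by
        simp only [hrdef]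
        rw [Finset.sum_sub_distrib, Finset.sum_fiberwise univ (fun u => γa (u + 1)) z,
          hzsum, hpq, sub_self]
      obtain ⟨X, hX⟩ := key γa ha r hr
      refine ⟨(X, X - z), ?_⟩
      simp only [hT, LinearMap.coe_mk, AddHom.coe_mk]
      refine Prod.ext ?_ ?_ <;> funext x
      · have := hX x
        simp only [hrdef] at this
        simp only [Pi.sub_apply, Finset.sum_sub_distrib]
        linarith
      · simp only [Pi.sub_apply, Finset.sum_sub_distrib]
        have := hz x
        linarith
  -- dimension counting
  have hva : 0 < va := by
    obtain ⟨x⟩ := (inferInstance : Nonempty (Fin l))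
    exact (γa x).pos
  have hvale : va ≤ l := by
    simpa using Fintype.card_le_of_surjective γa ha
  have hvble : vb ≤ l := by
    simpa using Fintype.card_le_of_surjective γb hb
  have hφsurj : Function.Surjective φ := by
    intro x
    refine ⟨(Pi.single (⟨0, hva⟩ : Fin va) x, 0), ?_⟩
    simp [hφ]
  have hφrange : LinearMap.range φ = ⊤ := LinearMap.range_eq_top.mpr hφsurj
  have hd1 : Module.finrank ℝ ((Fin l → ℝ) × (Fin l → ℝ)) = 2 * l := by
    simp [Module.finrank_prod]
    ring
  have hd2 : Module.finrank ℝ ((Fin va → ℝ) × (Fin vb → ℝ)) = va + vb := by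
    simp [Module.finrank_prod]
  have hrnφ := LinearMap.finrank_range_add_finrank_ker φ
  rw [hφrange, finrank_top, hd2] at hrnφ
  have hR : Module.finrank ℝ ℝ = 1 := Module.finrank_self ℝ
  rw [hR] at hrnφ
  have hrnT := LinearMap.finrank_range_add_finrank_ker T
  rw [hrange, hker, hd1] at hrnT
  omega
end

section
/- Let l ≥ 1, let {I_λ}_{λ=1}^{v_a} and {J_μ}_{μ=1}^{v_b} be partitions of [1,l] into nonempty sets, with Ĩ_λ = I_λ - 1 (mod l). Suppose real numbers a_1,...,a_{v_a}, b_1,...,b_{v_b} satisfy a_λ = b_μ whenever (I_λ ∪ Ĩ_λ) ∩ J_μ ≠ ∅. Then all the a_λ and b_μ are equal to each other. -/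
theorem bipartite_connectivity (l va vb : ℕ) [NeZero l] (hl : 1 ≤ l)
    (γa : Fin l → Fin va) (γb : Fin l → Fin vb)
    (ha : Function.Surjective γa) (hb : Function.Surjective γb)
    (a : Fin va → ℝ) (b : Fin vb → ℝ)
    (hedge : ∀ lam : Fin va, ∀ mu : Fin vb,
      (∃ u : Fin l, (γa u = lam ∨ γa (u + 1) = lam) ∧ γb u = mu) → a lam = b mu) :
    ∀ lam : Fin va, ∀ mu : Fin vb, a lam = b mu := by
  have h1 : ∀ u : Fin l, a (γa u) = b (γb u) := fun u =>
    hedge _ _ ⟨u, Or.inl rfl, rfl⟩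
  have h2 : ∀ u : Fin l, a (γa (u + 1)) = b (γb u) := fun u =>
    hedge _ _ ⟨u, Or.inr rfl, rfl⟩
  open Fin.NatCast in
  have h3 : ∀ n : ℕ, a (γa (n : Fin l)) = a (γa 0) := by
    intro n
    induction n with
    | zero => simp
    | succ n ih =>
      rw [Nat.cast_add, Nat.cast_one]
      rw [h2 n, ← h1 n, ih]
  open Fin.NatCast in
  have h4 : ∀ u : Fin l, a (γa u) = a (γa 0) := by
    intro u
    have := h3 u.val
    rwa [Fin.cast_val_eq_self] at this
  intro lam mu
  obtain ⟨u, rfl⟩ := ha lam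
  obtain ⟨v, rfl⟩ := hb mu
  rw [h4 u, ← h1 v, h4 v]
end

section
/- Fix reals y_a, y_b > 0 and set Y_a = max(1, y_a), Y_b = max(1, y_b). For every integer l ≥ 1, the main-term sum Σ_{i=1}^{l} y_a^{l-i+1} Σ_{(k_1,...,k_i): k_1+...+k_i = l-i+1, k_1+2k_2+...+i·k_i = l} (l!/i!) Π_{j=1}^{i} m_MP^(j)(y_b)^{k_j}/k_j! is bounded in absolute value by (32e²)^l · Y_a^{l+1} · Y_b^l. -/
open Finset

/-- The `l`-th moment of the Marchenko-Pastur distribution with parameter `y`. -/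
noncomputable def mMP (l : ℕ) (y : ℝ) : ℝ :=
  ∑ i ∈ Finset.range l, y ^ i / (i + 1) * (l.choose i) * ((l - 1).choose i)

lemma choose_le_two_pow' (n t : ℕ) : n.choose t ≤ 2 ^ n := by
  rcases le_or_gt t n with h | h
  · calc n.choose t ≤ ∑ m ∈ range (n + 1), n.choose m :=
          Finset.single_le_sum (f := fun m => n.choose m) (fun _ _ => Nat.zero_le _)
            (Finset.mem_range.2 (Nat.lt_succ_of_le h))
      _ = 2 ^ n := Nat.sum_range_choose n
  · simp [Nat.choose_eq_zero_of_lt h]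

lemma mMP_nonneg (j : ℕ) {y : ℝ} (hy : 0 ≤ y) : 0 ≤ mMP j y := by
  unfold mMP
  apply Finset.sum_nonneg
  intro t _
  positivity

lemma mMP_le {y : ℝ} (hy : 0 < y) (j : ℕ) : mMP j y ≤ (4 * max 1 y) ^ j := by
  have hY : (1 : ℝ) ≤ max 1 y := le_max_left _ _
  have hY0 : (0 : ℝ) ≤ max 1 y := by linarith
  calc mMP j y ≤ ∑ t ∈ range j, max 1 y ^ j * (j.choose t : ℝ) * 2 ^ (j - 1) := by
        unfold mMP
        apply Finset.sum_le_sum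
        intro t ht
        have htj : t ≤ j := le_of_lt (Finset.mem_range.1 ht)
        have h1 : y ^ t / (t + 1) ≤ max 1 y ^ j := by
          calc y ^ t / ((t : ℝ) + 1) ≤ y ^ t := by
                apply div_le_self (pow_nonneg hy.le t)
                have : (0:ℝ) ≤ (t : ℝ) := Nat.cast_nonneg t
                linarith
            _ ≤ max 1 y ^ t := pow_le_pow_left₀ hy.le (le_max_right _ _) t
            _ ≤ max 1 y ^ j := pow_le_pow_right₀ hY htj
        have h2 : (((j - 1).choose t : ℕ) : ℝ) ≤ 2 ^ (j - 1) := by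
          exact_mod_cast choose_le_two_pow' (j - 1) t
        exact mul_le_mul (mul_le_mul h1 le_rfl (Nat.cast_nonneg _) (by positivity)) h2
          (Nat.cast_nonneg _) (by positivity)
    _ = max 1 y ^ j * 2 ^ (j - 1) * ∑ t ∈ range j, (j.choose t : ℝ) := by
        rw [← Finset.sum_mul, ← Finset.mul_sum, mul_right_comm]
    _ ≤ max 1 y ^ j * 2 ^ (j - 1) * 2 ^ j := by
        have hs : (∑ t ∈ range j, (j.choose t : ℝ)) ≤ 2 ^ j := by
          have : ∑ t ∈ range j, j.choose t ≤ 2 ^ j := by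
            calc ∑ t ∈ range j, j.choose t ≤ ∑ t ∈ range (j + 1), j.choose t :=
                  Finset.sum_le_sum_of_subset (Finset.range_subset_range.2 (Nat.le_succ j))
              _ = 2 ^ j := Nat.sum_range_choose j
          exact_mod_cast this
        exact mul_le_mul_of_nonneg_left hs (by positivity)
    _ ≤ (4 * max 1 y) ^ j := by
        rw [mul_pow]
        have h21 : (2:ℝ) ^ (j - 1) ≤ 2 ^ j := pow_le_pow_right₀ one_le_two (Nat.sub_le j 1)
        have h4 : (2:ℝ) ^ j * 2 ^ j = 4 ^ j := by rw [← mul_pow]; norm_num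
        calc max 1 y ^ j * 2 ^ (j - 1) * 2 ^ j ≤ max 1 y ^ j * 2 ^ j * 2 ^ j := by
              have : (0:ℝ) ≤ max 1 y ^ j := by positivity
              have : (0:ℝ) ≤ (2:ℝ) ^ j := by positivity
              gcongr
          _ = 4 ^ j * max 1 y ^ j := by rw [mul_assoc, h4]; ring

lemma inner_bound (y_b : ℝ) (hyb : 0 < y_b) (l i : ℕ) (hi1 : 1 ≤ i) (hil : i ≤ l) :
    (∑ k : Fin i → Fin (l + 1),
      (if (∑ j : Fin i, (k j : ℕ)) = l - i + 1 ∧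
          (∑ j : Fin i, (j.val + 1) * (k j : ℕ)) = l then
        ((Nat.factorial l : ℝ) / (Nat.factorial i : ℝ)) *
          ∏ j : Fin i, mMP (j.val + 1) y_b ^ (k j : ℕ) / (Nat.factorial (k j : ℕ) : ℝ)
      else 0)) ≤ 16 ^ l * (Real.exp 1 ^ 2) ^ l * max 1 y_b ^ l := by
  set n := l - i + 1 with hn
  have hin : i + n = l + 1 := by omega
  have hn1 : 1 ≤ n := by omega
  have hnl : n ≤ l := by omega
  set Yb := max 1 y_b with hYbdef
  have hYb1 : (1:ℝ) ≤ Yb := le_max_left _ _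
  have hYb0 : (0:ℝ) < Yb := by linarith
  set g : Fin i → ℕ → ℝ := fun j m => ((n : ℝ) * (1/2) ^ j.val) ^ m / (Nat.factorial m : ℝ)
    with hg
  set A : ℝ := (4 * Yb) ^ l * ((Nat.factorial l : ℝ) / (Nat.factorial i : ℝ)) *
    ((2:ℝ) ^ (i - 1) / (n : ℝ) ^ n) with hA
  have hgnn : ∀ (j : Fin i) (m : ℕ), 0 ≤ g j m := by
    intro j m; rw [hg]; positivity
  have hAnn : 0 ≤ A := by
    rw [hA]; positivity
  -- Step 1: per-tuple bound
  have step1 : ∀ k : Fin i → Fin (l + 1),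
      (if (∑ j : Fin i, (k j : ℕ)) = n ∧ (∑ j : Fin i, (j.val + 1) * (k j : ℕ)) = l then
        ((Nat.factorial l : ℝ) / (Nat.factorial i : ℝ)) *
          ∏ j : Fin i, mMP (j.val + 1) y_b ^ (k j : ℕ) / (Nat.factorial (k j : ℕ) : ℝ)
      else 0) ≤ A * ∏ j : Fin i, g j (k j : ℕ) := by
    intro k
    split_ifs with h
    · obtain ⟨h1, h2⟩ := h
      have hjk : ∑ j : Fin i, j.val * (k j : ℕ) = i - 1 := by
        have hsplit : ∑ j : Fin i, (j.val + 1) * (k j : ℕ)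
            = (∑ j : Fin i, j.val * (k j : ℕ)) + ∑ j : Fin i, (k j : ℕ) := by
          rw [← Finset.sum_add_distrib]
          exact Finset.sum_congr rfl (fun j _ => by ring)
        omega
      have hP0 : (0:ℝ) < ∏ j : Fin i, (Nat.factorial (k j : ℕ) : ℝ) :=
        Finset.prod_pos (fun j _ => by positivity)
      have hprodg : ∏ j : Fin i, g j (k j : ℕ)
          = (n : ℝ) ^ n * (1/2 : ℝ) ^ (i - 1) / ∏ j : Fin i, (Nat.factorial (k j : ℕ) : ℝ) := by
        rw [hg]
        simp only []
        rw [Finset.prod_div_distrib]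
        congr 1
        calc ∏ j : Fin i, ((n : ℝ) * (1/2) ^ j.val) ^ (k j : ℕ)
            = ∏ j : Fin i, ((n : ℝ) ^ (k j : ℕ) * ((1/2 : ℝ)) ^ (j.val * (k j : ℕ))) := by
              exact Finset.prod_congr rfl (fun j _ => by rw [mul_pow, ← pow_mul])
          _ = (∏ j : Fin i, (n : ℝ) ^ (k j : ℕ)) *
              ∏ j : Fin i, (1/2 : ℝ) ^ (j.val * (k j : ℕ)) := Finset.prod_mul_distrib
          _ = (n : ℝ) ^ n * (1/2 : ℝ) ^ (i - 1) := by
              rw [Finset.prod_pow_eq_pow_sum, Finset.prod_pow_eq_pow_sum, h1, hjk]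
      have hm : ∏ j : Fin i, mMP (j.val + 1) y_b ^ (k j : ℕ) ≤ (4 * Yb) ^ l := by
        calc ∏ j : Fin i, mMP (j.val + 1) y_b ^ (k j : ℕ)
            ≤ ∏ j : Fin i, ((4 * Yb) ^ (j.val + 1)) ^ (k j : ℕ) := by
              apply Finset.prod_le_prod
              · intro j _; exact pow_nonneg (mMP_nonneg _ hyb.le) _
              · intro j _; exact pow_le_pow_left₀ (mMP_nonneg _ hyb.le) (mMP_le hyb _) _
          _ = (4 * Yb) ^ (∑ j : Fin i, (j.val + 1) * (k j : ℕ)) := by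
              rw [← Finset.prod_pow_eq_pow_sum]
              exact Finset.prod_congr rfl (fun j _ => by rw [← pow_mul])
          _ = (4 * Yb) ^ l := by rw [h2]
      have hkey : A * ∏ j : Fin i, g j (k j : ℕ)
          = ((4 * Yb) ^ l * ((Nat.factorial l : ℝ) / (Nat.factorial i : ℝ))) /
              ∏ j : Fin i, (Nat.factorial (k j : ℕ) : ℝ) := by
        rw [hprodg, hA]
        have hnn0 : ((n : ℝ)) ^ n ≠ 0 := by positivity
        have h2i : (2:ℝ) ^ (i-1) * (1/2 : ℝ) ^ (i-1) = 1 := by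
          rw [← mul_pow]; norm_num
        field_simp
        ring_nf
        linear_combination h2i
      rw [hkey, Finset.prod_div_distrib]
      calc ((Nat.factorial l : ℝ) / (Nat.factorial i : ℝ)) *
            ((∏ j : Fin i, mMP (j.val + 1) y_b ^ (k j : ℕ)) /
              ∏ j : Fin i, (Nat.factorial (k j : ℕ) : ℝ))
          = (((Nat.factorial l : ℝ) / (Nat.factorial i : ℝ)) *
              ∏ j : Fin i, mMP (j.val + 1) y_b ^ (k j : ℕ)) /
              ∏ j : Fin i, (Nat.factorial (k j : ℕ) : ℝ) := (mul_div_assoc _ _ _).symm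
        _ ≤ (((Nat.factorial l : ℝ) / (Nat.factorial i : ℝ)) * (4 * Yb) ^ l) /
              ∏ j : Fin i, (Nat.factorial (k j : ℕ) : ℝ) := by
            apply (div_le_div_iff_of_pos_right hP0).2
            exact mul_le_mul_of_nonneg_left hm (by positivity)
        _ = ((4 * Yb) ^ l * ((Nat.factorial l : ℝ) / (Nat.factorial i : ℝ))) /
              ∏ j : Fin i, (Nat.factorial (k j : ℕ) : ℝ) := by rw [mul_comm]
    · exact mul_nonneg hAnn (Finset.prod_nonneg (fun j _ => hgnn j _))
  -- Step 2: sum over all tuples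
  calc (∑ k : Fin i → Fin (l + 1),
      (if (∑ j : Fin i, (k j : ℕ)) = n ∧ (∑ j : Fin i, (j.val + 1) * (k j : ℕ)) = l then
        ((Nat.factorial l : ℝ) / (Nat.factorial i : ℝ)) *
          ∏ j : Fin i, mMP (j.val + 1) y_b ^ (k j : ℕ) / (Nat.factorial (k j : ℕ) : ℝ)
      else 0))
      ≤ ∑ k : Fin i → Fin (l + 1), A * ∏ j : Fin i, g j (k j : ℕ) :=
        Finset.sum_le_sum (fun k _ => step1 k)
    _ = A * ∑ k : Fin i → Fin (l + 1), ∏ j : Fin i, g j (k j : ℕ) :=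
        (Finset.mul_sum _ _ _).symm
    _ = A * ∏ j : Fin i, ∑ m : Fin (l + 1), g j (m : ℕ) := by
        rw [Finset.prod_univ_sum, Fintype.piFinset_univ]
    _ ≤ A * Real.exp (2 * n) := by
        apply mul_le_mul_of_nonneg_left _ hAnn
        calc ∏ j : Fin i, ∑ m : Fin (l + 1), g j (m : ℕ)
            ≤ ∏ j : Fin i, Real.exp ((n : ℝ) * (1/2) ^ j.val) := by
              apply Finset.prod_le_prod
              · intro j _; exact Finset.sum_nonneg (fun m _ => hgnn j _)
              · intro j _
                rw [show (∑ m : Fin (l + 1), g j (m : ℕ))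
                    = ∑ m ∈ range (l + 1), ((n : ℝ) * (1/2) ^ j.val) ^ m /
                      (Nat.factorial m : ℝ) from
                  Fin.sum_univ_eq_sum_range
                    (fun m => ((n : ℝ) * (1/2) ^ j.val) ^ m / (Nat.factorial m : ℝ)) (l + 1)]
                exact Real.sum_le_exp_of_nonneg (by positivity) (l + 1)
          _ = Real.exp (∑ j : Fin i, (n : ℝ) * (1/2) ^ j.val) := (Real.exp_sum _ _).symm
          _ ≤ Real.exp (2 * n) := by
              apply Real.exp_le_exp.2
              rw [← Finset.mul_sum]
              have hgeo : (∑ j : Fin i, ((1:ℝ)/2) ^ j.val) ≤ 2 := by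
                rw [Fin.sum_univ_eq_sum_range (fun m => ((1:ℝ)/2) ^ m) i]
                exact sum_geometric_two_le i
              calc (n : ℝ) * ∑ j : Fin i, ((1:ℝ)/2) ^ j.val ≤ (n : ℝ) * 2 :=
                    mul_le_mul_of_nonneg_left hgeo (Nat.cast_nonneg n)
                _ = 2 * n := by ring
    _ ≤ 16 ^ l * (Real.exp 1 ^ 2) ^ l * Yb ^ l := by
        have hfacN : Nat.factorial l * 2 ^ (i - 1) ≤ 4 ^ l * (Nat.factorial i * n ^ n) := by
          have hCh : (i + n).choose n * Nat.factorial i * Nat.factorial n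
              = Nat.factorial (i + n) := Nat.add_choose_mul_factorial_mul_factorial i n
          have hC : (l + 1).choose n ≤ 2 ^ (l + 1) := choose_le_two_pow' _ _
          have hfl : Nat.factorial l ≤ 2 ^ l * (Nat.factorial i * Nat.factorial n) := by
            have h2l : 2 * Nat.factorial l ≤ (l + 1) * Nat.factorial l :=
              Nat.mul_le_mul_right _ (by omega)
            have hfac1 : (l + 1) * Nat.factorial l = Nat.factorial (l + 1) :=
              (Nat.factorial_succ l).symm
            have : Nat.factorial (l + 1) ≤ 2 ^ (l + 1) * (Nat.factorial i * Nat.factorial n) := by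
              rw [← hin, ← hCh, hin]
              calc (l+1).choose n * Nat.factorial i * Nat.factorial n
                  ≤ 2 ^ (l+1) * Nat.factorial i * Nat.factorial n :=
                    Nat.mul_le_mul_right _ (Nat.mul_le_mul_right _ hC)
                _ = 2 ^ (l+1) * (Nat.factorial i * Nat.factorial n) := by ring
            have h2 : 2 * Nat.factorial l ≤ 2 * (2 ^ l * (Nat.factorial i * Nat.factorial n)) := by
              calc 2 * Nat.factorial l ≤ Nat.factorial (l + 1) := hfac1 ▸ h2l
                _ ≤ 2 ^ (l + 1) * (Nat.factorial i * Nat.factorial n) := this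
                _ = 2 * (2 ^ l * (Nat.factorial i * Nat.factorial n)) := by ring
            omega
          calc Nat.factorial l * 2 ^ (i - 1)
              ≤ (2 ^ l * (Nat.factorial i * Nat.factorial n)) * 2 ^ l :=
                Nat.mul_le_mul hfl (Nat.pow_le_pow_right (by norm_num) (by omega))
            _ ≤ (2 ^ l * (Nat.factorial i * n ^ n)) * 2 ^ l := by
                have := Nat.factorial_le_pow n
                exact Nat.mul_le_mul_right _ (Nat.mul_le_mul_left _
                  (Nat.mul_le_mul_left _ this))
            _ = 4 ^ l * (Nat.factorial i * n ^ n) := by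
                rw [show (4:ℕ) ^ l = 2 ^ l * 2 ^ l by rw [← Nat.mul_pow]]; ring
        have hA2 : ((Nat.factorial l : ℝ) / (Nat.factorial i : ℝ)) *
            ((2:ℝ) ^ (i - 1) / (n : ℝ) ^ n) ≤ 4 ^ l := by
          rw [div_mul_div_comm, div_le_iff₀ (by positivity)]
          calc ((Nat.factorial l : ℝ)) * 2 ^ (i - 1)
              ≤ ((4:ℝ) ^ l * ((Nat.factorial i : ℝ) * (n:ℝ) ^ n)) := by exact_mod_cast hfacN
            _ = 4 ^ l * ((Nat.factorial i : ℝ) * (n:ℝ) ^ n) := rfl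
        have hexp : Real.exp (2 * n) ≤ (Real.exp 1 ^ 2) ^ l := by
          rw [← pow_mul, Real.exp_one_pow]
          apply Real.exp_le_exp.2
          have h2n : 2 * n ≤ 2 * l := by omega
          exact_mod_cast h2n
        calc A * Real.exp (2 * n)
            ≤ A * (Real.exp 1 ^ 2) ^ l := mul_le_mul_of_nonneg_left hexp hAnn
          _ ≤ ((4 * Yb) ^ l * 4 ^ l) * (Real.exp 1 ^ 2) ^ l := by
              apply mul_le_mul_of_nonneg_right _ (by positivity)
              rw [hA, mul_assoc]
              exact mul_le_mul_of_nonneg_left hA2 (by positivity)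
          _ = 16 ^ l * (Real.exp 1 ^ 2) ^ l * Yb ^ l := by
              rw [mul_pow, show ((4:ℝ))^l * Yb ^l * 4^l = (4^l*4^l) * Yb^l by ring,
                ← mul_pow]
              norm_num
              ring

theorem main_term_bound (y_a y_b : ℝ) (hya : 0 < y_a) (hyb : 0 < y_b)
    (l : ℕ) (hl : 1 ≤ l) :
    |∑ i ∈ Finset.Icc 1 l, y_a ^ (l - i + 1) *
        ∑ k : Fin i → Fin (l + 1),
          (if (∑ j : Fin i, (k j : ℕ)) = l - i + 1 ∧
              (∑ j : Fin i, (j.val + 1) * (k j : ℕ)) = l then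
            ((Nat.factorial l : ℝ) / (Nat.factorial i : ℝ)) *
              ∏ j : Fin i, mMP (j.val + 1) y_b ^ (k j : ℕ) / (Nat.factorial (k j : ℕ) : ℝ)
          else 0)|
      ≤ (32 * Real.exp 1 ^ 2) ^ l * max 1 y_a ^ (l + 1) * max 1 y_b ^ l := by
  have hYa1 : (1:ℝ) ≤ max 1 y_a := le_max_left _ _
  have hYb1 : (1:ℝ) ≤ max 1 y_b := le_max_left _ _
  have hTnn : ∀ i : ℕ, 0 ≤ ∑ k : Fin i → Fin (l + 1),
      (if (∑ j : Fin i, (k j : ℕ)) = l - i + 1 ∧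
          (∑ j : Fin i, (j.val + 1) * (k j : ℕ)) = l then
        ((Nat.factorial l : ℝ) / (Nat.factorial i : ℝ)) *
          ∏ j : Fin i, mMP (j.val + 1) y_b ^ (k j : ℕ) / (Nat.factorial (k j : ℕ) : ℝ)
      else 0) := by
    intro i
    apply Finset.sum_nonneg
    intro k _
    split_ifs with h
    · apply mul_nonneg (by positivity)
      exact Finset.prod_nonneg (fun j _ =>
        div_nonneg (pow_nonneg (mMP_nonneg _ hyb.le) _) (Nat.cast_nonneg _))
    · exact le_refl 0
  have h0 : 0 ≤ ∑ i ∈ Finset.Icc 1 l, y_a ^ (l - i + 1) *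
      ∑ k : Fin i → Fin (l + 1),
        (if (∑ j : Fin i, (k j : ℕ)) = l - i + 1 ∧
            (∑ j : Fin i, (j.val + 1) * (k j : ℕ)) = l then
          ((Nat.factorial l : ℝ) / (Nat.factorial i : ℝ)) *
            ∏ j : Fin i, mMP (j.val + 1) y_b ^ (k j : ℕ) / (Nat.factorial (k j : ℕ) : ℝ)
        else 0) :=
    Finset.sum_nonneg (fun i _ => mul_nonneg (pow_nonneg hya.le _) (hTnn i))
  rw [abs_of_nonneg h0]
  have hbound : ∀ i ∈ Finset.Icc 1 l, y_a ^ (l - i + 1) *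
      (∑ k : Fin i → Fin (l + 1),
        (if (∑ j : Fin i, (k j : ℕ)) = l - i + 1 ∧
            (∑ j : Fin i, (j.val + 1) * (k j : ℕ)) = l then
          ((Nat.factorial l : ℝ) / (Nat.factorial i : ℝ)) *
            ∏ j : Fin i, mMP (j.val + 1) y_b ^ (k j : ℕ) / (Nat.factorial (k j : ℕ) : ℝ)
        else 0))
      ≤ max 1 y_a ^ (l + 1) * (16 ^ l * (Real.exp 1 ^ 2) ^ l * max 1 y_b ^ l) := by
    intro i hi
    obtain ⟨hi1, hil⟩ := Finset.mem_Icc.1 hi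
    have hya' : y_a ^ (l - i + 1) ≤ max 1 y_a ^ (l + 1) := by
      calc y_a ^ (l - i + 1) ≤ max 1 y_a ^ (l - i + 1) :=
            pow_le_pow_left₀ hya.le (le_max_right _ _) _
        _ ≤ max 1 y_a ^ (l + 1) := pow_le_pow_right₀ hYa1 (by omega)
    exact mul_le_mul hya' (inner_bound y_b hyb l i hi1 hil) (hTnn i) (by positivity)
  calc (∑ i ∈ Finset.Icc 1 l, y_a ^ (l - i + 1) *
        ∑ k : Fin i → Fin (l + 1),
          (if (∑ j : Fin i, (k j : ℕ)) = l - i + 1 ∧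
              (∑ j : Fin i, (j.val + 1) * (k j : ℕ)) = l then
            ((Nat.factorial l : ℝ) / (Nat.factorial i : ℝ)) *
              ∏ j : Fin i, mMP (j.val + 1) y_b ^ (k j : ℕ) / (Nat.factorial (k j : ℕ) : ℝ)
          else 0))
      ≤ ∑ i ∈ Finset.Icc 1 l,
          max 1 y_a ^ (l + 1) * (16 ^ l * (Real.exp 1 ^ 2) ^ l * max 1 y_b ^ l) :=
        Finset.sum_le_sum hbound
    _ = (l : ℝ) * (max 1 y_a ^ (l + 1) * (16 ^ l * (Real.exp 1 ^ 2) ^ l * max 1 y_b ^ l)) := by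
        rw [Finset.sum_const, Nat.card_Icc]
        simp [nsmul_eq_mul]
    _ ≤ (2:ℝ) ^ l * (max 1 y_a ^ (l + 1) * (16 ^ l * (Real.exp 1 ^ 2) ^ l * max 1 y_b ^ l)) := by
        apply mul_le_mul_of_nonneg_right _ (by positivity)
        exact_mod_cast (Nat.lt_two_pow_self (n := l)).le
    _ = (32 * Real.exp 1 ^ 2) ^ l * max 1 y_a ^ (l + 1) * max 1 y_b ^ l := by
        rw [show (32:ℝ) * Real.exp 1 ^ 2 = 2 * (16 * Real.exp 1 ^ 2) by ring,
          mul_pow, mul_pow]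
        ring
end
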